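/- For the k-uniform matroid on n ≥ k ≥ 1 elements with rank function f(S) = min(|S|,k), the correlation gap equals k/Φ(n,k), where Φ(n,k) = E[min(X,k)] for X ~ Binomial(n, k/n). In particular, for any distribution D on subsets of {1,...,n} with marginals q, E over the independent distribution with the same marginals of min(|S|,k) is at least (Φ(n,k)/k)·E_{S~D}[min(|S|,k)]. -/

import Mathlib

open Finset

/-- `Phi n k` is the expectation of `min(X, k)` for `X ~ Binomial(n, k/n)`. -/
noncomputable def Phi (n k : ℕ) : ℝ :=
  ∑ t ∈ Finset.range (n + 1),
    (n.choose t : ℝ) * ((k : ℝ) / n) ^ t * (1 - (k : ℝ) / n) ^ (n - t) * (min t k : ℕ)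

/-- Marginal probability of element `i` under distribution `D`. -/
noncomputable def marginal {n : ℕ} (D : Finset (Fin n) → ℝ) (i : Fin n) : ℝ :=
  ∑ S ∈ Finset.univ.filter (fun S : Finset (Fin n) => i ∈ S), D S

/-- Expectation of `f` under independent inclusion with probabilities `q`. -/
noncomputable def indepExp {n : ℕ} (q : Fin n → ℝ) (f : Finset (Fin n) → ℝ) : ℝ :=
  ∑ S : Finset (Fin n), ((∏ i ∈ S, q i) * ∏ i ∈ Sᶜ, (1 - q i)) * f S

/-- Expectation of `h` under `Binomial(m,p)` (formally, for any real `p`). -/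
noncomputable def BinE (m : ℕ) (p : ℝ) (h : ℕ → ℝ) : ℝ :=
  ∑ t ∈ Finset.range (m + 1), (m.choose t : ℝ) * p ^ t * (1 - p) ^ (m - t) * h t

lemma binE_zero (p : ℝ) (h : ℕ → ℝ) : BinE 0 p h = h 0 := by
  simp [BinE]

lemma binE_succ (m : ℕ) (p : ℝ) (h : ℕ → ℝ) :
    BinE (m + 1) p h = (1 - p) * BinE m p h + p * BinE m p (fun t => h (t + 1)) := by
  have key : ∀ (h' : ℕ → ℝ),
      (∑ t ∈ Finset.range (m+1), (m.choose t : ℝ) * p ^ t * (1-p) ^ (m + 1 - t) * h' t)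
        = (1 - p) * BinE m p h' := by
    intro h'
    rw [BinE, mul_sum]
    refine sum_congr rfl fun t ht => ?_
    have htm : t ≤ m := by simpa using Nat.lt_succ_iff.mp (mem_range.mp ht)
    have : m + 1 - t = (m - t) + 1 := by omega
    rw [this, pow_succ]
    ring
  rw [BinE, Finset.sum_range_succ']
  have expand : ∀ t ∈ Finset.range (m+1),
      ((m+1).choose (t+1) : ℝ) * p ^ (t+1) * (1-p) ^ (m + 1 - (t+1)) * h (t+1)
        = (m.choose t : ℝ) * p ^ (t+1) * (1-p) ^ (m - t) * h (t+1)
          + (m.choose (t+1) : ℝ) * p ^ (t+1) * (1-p) ^ (m + 1 - (t+1)) * h (t+1) := by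
    intro t ht
    have : (m+1).choose (t+1) = m.choose t + m.choose (t+1) := Nat.choose_succ_succ m t
    have h2 : m + 1 - (t+1) = m - t := by omega
    rw [this, h2]
    push_cast
    ring
  rw [Finset.sum_congr rfl expand, Finset.sum_add_distrib]
  have part1 : (∑ t ∈ Finset.range (m+1), (m.choose t : ℝ) * p ^ (t+1) * (1-p) ^ (m - t) * h (t+1))
      = p * BinE m p (fun t => h (t+1)) := by
    rw [BinE, mul_sum]
    refine sum_congr rfl fun t ht => ?_
    rw [pow_succ]
    ring
  have part2 : (∑ t ∈ Finset.range (m+1), (m.choose (t+1) : ℝ) * p ^ (t+1) * (1-p) ^ (m + 1 - (t+1)) * h (t+1))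
      + ((m+1).choose 0 : ℝ) * p ^ 0 * (1-p) ^ (m + 1 - 0) * h 0
      = (1 - p) * BinE m p h := by
    have hz : (m.choose (m+1) : ℝ) = 0 := by
      rw [Nat.choose_eq_zero_of_lt (by omega)]; norm_num
    rw [← key h]
    conv_lhs => rw [Finset.sum_range_succ]
    conv_rhs => rw [Finset.sum_range_succ']
    rw [hz]
    norm_num
  linarith [part1, part2]

lemma binE_add (m : ℕ) (p : ℝ) (h h' : ℕ → ℝ) :
    BinE m p (fun t => h t + h' t) = BinE m p h + BinE m p h' := by
  rw [BinE, BinE, BinE, ← Finset.sum_add_distrib]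
  exact sum_congr rfl fun t _ => by ring

lemma binE_smul (m : ℕ) (p c : ℝ) (h : ℕ → ℝ) :
    BinE m p (fun t => c * h t) = c * BinE m p h := by
  rw [BinE, BinE, mul_sum]
  exact sum_congr rfl fun t _ => by ring

lemma binE_congr (m : ℕ) (p : ℝ) (h h' : ℕ → ℝ) (he : ∀ t ≤ m, h t = h' t) :
    BinE m p h = BinE m p h' := by
  refine sum_congr rfl fun t ht => ?_
  rw [he t (by simpa using Nat.lt_succ_iff.mp (mem_range.mp ht))]

lemma binE_le_binE (m : ℕ) (p : ℝ) (hp0 : 0 ≤ p) (hp1 : p ≤ 1) (h h' : ℕ → ℝ)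
    (hle : ∀ t ≤ m, h t ≤ h' t) : BinE m p h ≤ BinE m p h' := by
  refine sum_le_sum fun t ht => ?_
  have htm : t ≤ m := by simpa using Nat.lt_succ_iff.mp (mem_range.mp ht)
  have hw : (0:ℝ) ≤ (m.choose t : ℝ) * p ^ t * (1 - p) ^ (m - t) := by
    have h1p : (0:ℝ) ≤ 1 - p := by linarith
    exact mul_nonneg (mul_nonneg (Nat.cast_nonneg _) (pow_nonneg hp0 _)) (pow_nonneg h1p _)
  exact mul_le_mul_of_nonneg_left (hle t htm) hw

lemma binE_const (m : ℕ) (p c : ℝ) : BinE m p (fun _ => c) = c := by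
  induction m with
  | zero => simp [binE_zero]
  | succ m ih => rw [binE_succ, ih]; ring

lemma binE_id (m : ℕ) (p : ℝ) : BinE m p (fun t => (t : ℝ)) = m * p := by
  induction m with
  | zero => simp [binE_zero]
  | succ m ih =>
    rw [binE_succ]
    have h1 : BinE m p (fun t => ((t + 1 : ℕ) : ℝ))
        = BinE m p (fun t => (t:ℝ)) + BinE m p (fun _ => (1:ℝ)) := by
      rw [← binE_add]
      exact binE_congr _ _ _ _ fun t _ => by push_cast; ring
    rw [h1, ih, binE_const]
    push_cast
    ring

/-- Binomial thinning identity. -/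
lemma binE_thin (m : ℕ) (p lam : ℝ) (h : ℕ → ℝ) :
    BinE m (lam * p) h = BinE m p (fun t => BinE t lam h) := by
  induction m generalizing h with
  | zero => simp [binE_zero]
  | succ m ih =>
    rw [binE_succ, binE_succ, ih, ih]
    have e1 : BinE m p (fun t => BinE (t+1) lam h)
        = BinE m p (fun t => (1 - lam) * BinE t lam h + lam * BinE t lam (fun u => h (u+1))) := by
      refine binE_congr _ _ _ _ fun t _ => ?_
      rw [binE_succ]
    rw [e1]
    have e2 : BinE m p (fun t => (1 - lam) * BinE t lam h + lam * BinE t lam (fun u => h (u+1)))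
        = (1 - lam) * BinE m p (fun t => BinE t lam h)
          + lam * BinE m p (fun t => BinE t lam (fun u => h (u+1))) := by
      rw [← binE_smul, ← binE_smul, ← binE_add]
    rw [e2]
    ring

/-- the `k`-truncated rank function on cardinalities -/
noncomputable def gmin (k : ℕ) : ℕ → ℝ := fun t => ((min t k : ℕ) : ℝ)

lemma gmin_mono (k : ℕ) : ∀ t, gmin k t ≤ gmin k (t + 1) := by
  intro t
  unfold gmin
  exact_mod_cast min_le_min (Nat.le_succ t) le_rfl

lemma gmin_mono' (k : ℕ) {s t : ℕ} (h : s ≤ t) : gmin k s ≤ gmin k t := by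
  unfold gmin
  exact_mod_cast min_le_min h le_rfl

lemma gmin_concave (k : ℕ) : ∀ t, gmin k t + gmin k (t + 2) ≤ 2 * gmin k (t + 1) := by
  intro t
  unfold gmin
  have : min t k + min (t+2) k ≤ 2 * min (t+1) k := by omega
  exact_mod_cast this

lemma gmin_nonneg (k : ℕ) (t : ℕ) : 0 ≤ gmin k t := Nat.cast_nonneg _

lemma gmin_le_k (k : ℕ) (t : ℕ) : gmin k t ≤ k := by
  unfold gmin; exact_mod_cast Nat.min_le_right t k

lemma gmin_le_self (k : ℕ) (t : ℕ) : gmin k t ≤ t := by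
  unfold gmin; exact_mod_cast Nat.min_le_left t k

/-- inner inequality: `E[min(Bin(m,λ),k)] ≥ λ·min(m,k)` for `λ ∈ [0,1]`. -/
lemma binE_gmin_ge (k : ℕ) (m : ℕ) (lam : ℝ) (h0 : 0 ≤ lam) (h1 : lam ≤ 1) :
    lam * gmin k m ≤ BinE m lam (gmin k) := by
  rcases le_or_gt m k with hmk | hkm
  · -- m ≤ k : expectation is exactly λ m
    have : BinE m lam (gmin k) = BinE m lam (fun t => (t : ℝ)) := by
      refine binE_congr _ _ _ _ fun t ht => ?_
      unfold gmin
      rw [min_eq_left (le_trans ht hmk)]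
    rw [this, binE_id]
    have : gmin k m = (m : ℝ) := by unfold gmin; rw [min_eq_left hmk]
    rw [this]
    linarith
  · -- m > k : monotone in m down to m = k
    have mono : ∀ j, BinE (k + j) lam (gmin k) ≥ lam * k := by
      intro j
      induction j with
      | zero =>
        rw [Nat.add_zero]
        have : BinE k lam (gmin k) = BinE k lam (fun t => (t : ℝ)) := by
          refine binE_congr _ _ _ _ fun t ht => ?_
          unfold gmin; rw [min_eq_left ht]
        rw [this, binE_id]
        nlinarith [Nat.cast_nonneg (α := ℝ) k]
      | succ j ih =>
        have step : BinE (k + j) lam (gmin k) ≤ BinE (k + j + 1) lam (gmin k) := by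
          rw [binE_succ]
          have h2 : BinE (k+j) lam (gmin k) ≤ BinE (k+j) lam (fun t => gmin k (t+1)) :=
            binE_le_binE _ _ h0 h1 _ _ fun t _ => gmin_mono k t
          nlinarith [h2]
        calc lam * k ≤ BinE (k + j) lam (gmin k) := ih
          _ ≤ BinE (k + j + 1) lam (gmin k) := step
    have := mono (m - k)
    rw [show k + (m - k) = m by omega] at this
    have hg : gmin k m = (k : ℝ) := by
      unfold gmin; rw [min_eq_right (le_of_lt hkm)]
    rw [hg]
    exact this

/-- partial multilinear expectation over ground set `A`. -/
noncomputable def EB {n : ℕ} (A : Finset (Fin n)) (q : Fin n → ℝ) (h : ℕ → ℝ) : ℝ :=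
  ∑ S ∈ A.powerset, (∏ i ∈ S, q i) * (∏ i ∈ A \ S, (1 - q i)) * h S.card

variable {n : ℕ}

lemma eb_empty (q : Fin n → ℝ) (h : ℕ → ℝ) : EB ∅ q h = h 0 := by
  simp [EB]

lemma eb_pivot {A : Finset (Fin n)} {i : Fin n} (hiA : i ∉ A) (q : Fin n → ℝ) (h : ℕ → ℝ) :
    EB (insert i A) q h = (1 - q i) * EB A q h + q i * EB A q (fun t => h (t + 1)) := by
  rw [EB, Finset.sum_powerset_insert hiA]
  have part1 : ∀ S ∈ A.powerset,
      (∏ l ∈ S, q l) * (∏ l ∈ insert i A \ S, (1 - q l)) * h S.card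
        = (1 - q i) * ((∏ l ∈ S, q l) * (∏ l ∈ A \ S, (1 - q l)) * h S.card) := by
    intro S hS
    have hSA : S ⊆ A := mem_powerset.mp hS
    have hiS : i ∉ S := fun hc => hiA (hSA hc)
    have hdiff : insert i A \ S = insert i (A \ S) := Finset.insert_sdiff_of_notMem _ hiS
    have hiAS : i ∉ A \ S := fun hc => hiA (mem_sdiff.mp hc).1
    rw [hdiff, Finset.prod_insert hiAS]
    ring
  have part2 : ∀ S ∈ A.powerset,
      (∏ l ∈ insert i S, q l) * (∏ l ∈ insert i A \ insert i S, (1 - q l)) * h (insert i S).card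
        = q i * ((∏ l ∈ S, q l) * (∏ l ∈ A \ S, (1 - q l)) * h (S.card + 1)) := by
    intro S hS
    have hSA : S ⊆ A := mem_powerset.mp hS
    have hiS : i ∉ S := fun hc => hiA (hSA hc)
    have hdiff : insert i A \ insert i S = A \ S := by
      ext x
      simp only [mem_sdiff, mem_insert]
      constructor
      · rintro ⟨hx1 | hx1, hx2⟩
        · exact absurd (Or.inl hx1) hx2
        · exact ⟨hx1, fun hxS => hx2 (Or.inr hxS)⟩
      · rintro ⟨hx1, hx2⟩
        refine ⟨Or.inr hx1, ?_⟩
        rintro (rfl | hxS)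
        · exact hiA hx1
        · exact hx2 hxS
    rw [hdiff, Finset.prod_insert hiS, Finset.card_insert_of_notMem hiS]
    ring
  rw [Finset.sum_congr rfl part1, Finset.sum_congr rfl part2, ← Finset.mul_sum, ← Finset.mul_sum]
  rfl

lemma eb_congr {A : Finset (Fin n)} {q q' : Fin n → ℝ} (h : ℕ → ℝ)
    (he : ∀ i ∈ A, q i = q' i) : EB A q h = EB A q' h := by
  refine sum_congr rfl fun S hS => ?_
  have hSA : S ⊆ A := mem_powerset.mp hS
  rw [Finset.prod_congr (rfl : S = S) (fun i hi => he i (hSA hi)),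
    Finset.prod_congr (rfl : A \ S = A \ S)
      (fun i hi => by rw [he i (mem_sdiff.mp hi).1])]

lemma eb_add (A : Finset (Fin n)) (q : Fin n → ℝ) (h h' : ℕ → ℝ) :
    EB A q (fun t => h t + h' t) = EB A q h + EB A q h' := by
  rw [EB, EB, EB, ← Finset.sum_add_distrib]
  exact sum_congr rfl fun S _ => by ring

lemma eb_le_eb {A : Finset (Fin n)} {q : Fin n → ℝ}
    (hq : ∀ i ∈ A, 0 ≤ q i ∧ q i ≤ 1) {h h' : ℕ → ℝ}
    (hle : ∀ t, h t ≤ h' t) : EB A q h ≤ EB A q h' := by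
  refine sum_le_sum fun S hS => ?_
  have hSA : S ⊆ A := mem_powerset.mp hS
  have hw : 0 ≤ (∏ l ∈ S, q l) * (∏ l ∈ A \ S, (1 - q l)) :=
    mul_nonneg (Finset.prod_nonneg fun l hl => (hq l (hSA hl)).1)
      (Finset.prod_nonneg fun l hl => by linarith [(hq l (mem_sdiff.mp hl).1).2])
  exact mul_le_mul_of_nonneg_left (hle S.card) hw

lemma eb_const_q {A : Finset (Fin n)} {q : Fin n → ℝ} {p : ℝ}
    (hq : ∀ i ∈ A, q i = p) (h : ℕ → ℝ) : EB A q h = BinE A.card p h := by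
  induction A using Finset.induction_on generalizing h with
  | empty => rw [eb_empty]; simp [binE_zero]
  | @insert i A hiA ih =>
    rw [eb_pivot hiA, Finset.card_insert_of_notMem hiA, binE_succ,
      ih (fun l hl => hq l (mem_insert_of_mem hl)) h,
      ih (fun l hl => hq l (mem_insert_of_mem hl)) (fun t => h (t+1)),
      hq i (mem_insert_self i A)]

section Sym
variable {n : ℕ}

section TwoSet
variable {i j : Fin n} (hij : i ≠ j)

lemma two_set_facts (hij : i ≠ j) :
    j ∉ (Finset.univ.erase i).erase j ∧ i ∉ insert j ((Finset.univ.erase i).erase j) ∧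
      insert i (insert j ((Finset.univ.erase i).erase j)) = Finset.univ := by
  refine ⟨Finset.notMem_erase _ _, ?_, ?_⟩
  · simp only [mem_insert, mem_erase]
    push_neg
    exact ⟨hij, fun _ h => absurd rfl h⟩
  · rw [Finset.insert_erase (by simp [mem_erase, hij.symm]), Finset.insert_erase (mem_univ i)]

/-- double pivot expansion of the full multilinear expectation. -/
lemma eb_univ_expand (hij : i ≠ j) (q : Fin n → ℝ) (h : ℕ → ℝ) :
    EB Finset.univ q h
      = (1 - q i) * (1 - q j) * EB ((Finset.univ.erase i).erase j) q h
        + ((1 - q i) * q j + q i * (1 - q j)) * EB ((Finset.univ.erase i).erase j) q (fun t => h (t+1))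
        + q i * q j * EB ((Finset.univ.erase i).erase j) q (fun t => h (t+2)) := by
  obtain ⟨hjA, hiA, huniv⟩ := two_set_facts hij
  conv_lhs => rw [← huniv]
  rw [eb_pivot hiA, eb_pivot hjA, eb_pivot hjA]
  have : (fun t => h (t + 1 + 1)) = (fun t => h (t + 2)) := by funext t; norm_num
  rw [this]
  ring

/-- averaging two coordinates does not increase the expectation of a concave-of-cardinality fn. -/
lemma midpoint_le (k : ℕ) (hij : i ≠ j) (q : Fin n → ℝ)
    (hq : ∀ l, 0 ≤ q l ∧ q l ≤ 1) :
    EB Finset.univ (Function.update (Function.update q i ((q i + q j)/2)) j ((q i + q j)/2)) (gmin k)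
      ≤ EB Finset.univ q (gmin k) := by
  set m := (q i + q j)/2 with hm
  set q' := Function.update (Function.update q i m) j m with hq'
  have hq'i : q' i = m := by
    rw [hq', Function.update_of_ne hij, Function.update_self]
  have hq'j : q' j = m := by rw [hq', Function.update_self]
  have hAgree : ∀ l ∈ (Finset.univ.erase i).erase j, q' l = q l := by
    intro l hl
    obtain ⟨hlj, hli⟩ : l ≠ j ∧ l ≠ i := by
      simpa [mem_erase] using hl
    rw [hq', Function.update_of_ne hlj, Function.update_of_ne hli]
  set A := (Finset.univ.erase i).erase j with hA
  rw [eb_univ_expand hij q' (gmin k), eb_univ_expand hij q (gmin k),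
    eb_congr (gmin k) hAgree, eb_congr (fun t => gmin k (t+1)) hAgree,
    eb_congr (fun t => gmin k (t+2)) hAgree, hq'i, hq'j]
  set E0 := EB A q (gmin k)
  set E1 := EB A q (fun t => gmin k (t+1))
  set E2 := EB A q (fun t => gmin k (t+2))
  have hconc : E0 + E2 ≤ 2 * E1 := by
    have h1 : EB A q (fun t => gmin k t + gmin k (t+2)) ≤ EB A q (fun t => 2 * gmin k (t+1)) := by
      refine eb_le_eb (fun l _ => hq l) fun t => gmin_concave k t
    have h2 : EB A q (fun t => gmin k t + gmin k (t+2)) = E0 + E2 := eb_add A q _ _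
    have h3 : EB A q (fun t => 2 * gmin k (t+1)) = 2 * E1 := by
      have := eb_add A q (fun t => gmin k (t+1)) (fun t => gmin k (t+1))
      have e : (fun t => 2 * gmin k (t+1)) = (fun t => gmin k (t+1) + gmin k (t+1)) := by
        funext t; ring
      rw [e, this]; ring
    linarith
  have key : (1-m)*(1-m)*E0 + ((1-m)*m + m*(1-m))*E1 + m*m*E2
      = (1 - q i)*(1 - q j)*E0 + ((1 - q i)*(q j) + (q i)*(1 - q j))*E1 + (q i)*(q j)*E2
        - ((q i - q j)/2)^2 * (2*E1 - E0 - E2) := by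
    rw [hm]; ring
  have hnn : 0 ≤ ((q i - q j)/2)^2 * (2*E1 - E0 - E2) :=
    mul_nonneg (sq_nonneg _) (by linarith)
  linarith
end TwoSet

/-- Symmetrization: the multilinear expectation is minimized at equal coordinates. -/
lemma symmetrization (k : ℕ) (hn : 0 < n) (q : Fin n → ℝ) (hq : ∀ l, 0 ≤ q l ∧ q l ≤ 1) :
    BinE n ((∑ l, q l)/n) (gmin k) ≤ EB Finset.univ q (gmin k) := by
  classical
  set s := ∑ l, q l with hs
  set G : (Fin n → ℝ) → ℝ := fun x => EB Finset.univ x (gmin k) with hG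
  have contG : Continuous G := by
    apply continuous_finset_sum
    intro S _
    exact ((continuous_finset_prod _ (fun l _ => continuous_apply l)).mul
      (continuous_finset_prod _ (fun l _ => continuous_const.sub (continuous_apply l)))).mul
      continuous_const
  have contS : Continuous fun x : Fin n → ℝ => ∑ l, (x l)^2 :=
    continuous_finset_sum _ fun l _ => (continuous_apply l).pow 2
  have contSum : Continuous fun x : Fin n → ℝ => ∑ l, x l :=
    continuous_finset_sum _ fun l _ => continuous_apply l
  set K : Set (Fin n → ℝ) := {x | (∀ l, x l ∈ Set.Icc (0:ℝ) 1) ∧ ∑ l, x l = s} with hK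
  have hKeq : K = (Set.univ.pi fun _ : Fin n => Set.Icc (0:ℝ) 1) ∩ {x | ∑ l, x l = s} := by
    ext x
    constructor
    · rintro ⟨h1, h2⟩; exact ⟨fun l _ => h1 l, h2⟩
    · rintro ⟨h1, h2⟩; exact ⟨fun l => h1 l (Set.mem_univ l), h2⟩
  have hKcomp : IsCompact K := by
    rw [hKeq]
    exact ((isCompact_univ_pi fun _ => isCompact_Icc).inter_right
      (isClosed_eq contSum continuous_const))
  have hqK : q ∈ K := ⟨fun l => ⟨(hq l).1, (hq l).2⟩, rfl⟩
  obtain ⟨q₁, hq₁K, hmin₁⟩ := hKcomp.exists_isMinOn ⟨q, hqK⟩ contG.continuousOn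
  set K' : Set (Fin n → ℝ) := K ∩ {x | G x = G q₁} with hK'
  have hK'comp : IsCompact K' := hKcomp.inter_right (isClosed_eq contG continuous_const)
  have hq₁K' : q₁ ∈ K' := ⟨hq₁K, rfl⟩
  obtain ⟨q₂, hq₂K', hmin₂⟩ := hK'comp.exists_isMinOn ⟨q₁, hq₁K'⟩ contS.continuousOn
  obtain ⟨hq₂K, hq₂G⟩ := hq₂K'
  -- q₂ has all coordinates equal
  have hconst : ∀ a b : Fin n, q₂ a = q₂ b := by
    intro a b
    by_contra hne
    have hab : a ≠ b := fun hc => hne (by rw [hc])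
    set m := (q₂ a + q₂ b)/2 with hm
    set q₃ := Function.update (Function.update q₂ a m) b m with hq₃
    have hq₃vals : ∀ l, q₃ l = if l = b then m else if l = a then m else q₂ l := by
      intro l
      rw [hq₃]
      by_cases hlb : l = b
      · subst hlb; rw [Function.update_self]; simp
      · rw [Function.update_of_ne hlb]
        by_cases hla : l = a
        · subst hla; rw [Function.update_self]; simp [hab]
        · rw [Function.update_of_ne hla]; simp [hlb, hla]
    have hmIcc : m ∈ Set.Icc (0:ℝ) 1 := by
      obtain ⟨ha1, ha2⟩ := (hq₂K.1 a)
      obtain ⟨hb1, hb2⟩ := (hq₂K.1 b)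
      refine Set.mem_Icc.mpr ⟨?_, ?_⟩ <;> rw [hm] <;> linarith
    -- sum is preserved
    have hsum3 : ∑ l, q₃ l = ∑ l, q₂ l := by
      have h3 : ∑ l, q₃ l = ∑ l ∈ (Finset.univ.erase b).erase a, q₃ l + q₃ a + q₃ b := by
        rw [Finset.sum_erase_add _ _ (by simp [mem_erase, hab] : a ∈ Finset.univ.erase b),
          Finset.sum_erase_add _ _ (mem_univ b)]
      have h2 : ∑ l, q₂ l = ∑ l ∈ (Finset.univ.erase b).erase a, q₂ l + q₂ a + q₂ b := by
        rw [Finset.sum_erase_add _ _ (by simp [mem_erase, hab] : a ∈ Finset.univ.erase b),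
          Finset.sum_erase_add _ _ (mem_univ b)]
      have hagree : ∑ l ∈ (Finset.univ.erase b).erase a, q₃ l
          = ∑ l ∈ (Finset.univ.erase b).erase a, q₂ l := by
        refine sum_congr rfl fun l hl => ?_
        obtain ⟨hla, hlb⟩ : l ≠ a ∧ l ≠ b := by simpa [mem_erase] using hl
        rw [hq₃vals]; simp [hla, hlb]
      have hqa : q₃ a = m := by rw [hq₃vals]; simp [hab]
      have hqb : q₃ b = m := by rw [hq₃vals]; simp
      rw [h3, h2, hagree, hqa, hqb, hm]; ring
    have hq₃K : q₃ ∈ K := by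
      constructor
      · intro l
        rw [hq₃vals]
        by_cases hlb : l = b
        · simpa [hlb] using hmIcc
        · by_cases hla : l = a
          · simpa [hlb, hla] using hmIcc
          · simpa [hlb, hla] using hq₂K.1 l
      · rw [hsum3]; exact hq₂K.2
    -- G does not increase
    have hGle : G q₃ ≤ G q₂ := midpoint_le k hab q₂ (fun l => hq₂K.1 l)
    have hGq₃ : G q₃ = G q₁ := le_antisymm (by rw [← hq₂G] at *; exact hGle) (hmin₁ hq₃K)
    have hq₃K' : q₃ ∈ K' := ⟨hq₃K, hGq₃⟩
    -- sum of squares strictly decreases: contradiction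
    have hsq : ∑ l, (q₃ l)^2 < ∑ l, (q₂ l)^2 := by
      have h3 : ∑ l, (q₃ l)^2 = ∑ l ∈ (Finset.univ.erase b).erase a, (q₃ l)^2 + (q₃ a)^2 + (q₃ b)^2 := by
        rw [Finset.sum_erase_add _ _ (by simp [mem_erase, hab] : a ∈ Finset.univ.erase b),
          Finset.sum_erase_add _ _ (mem_univ b)]
      have h2 : ∑ l, (q₂ l)^2 = ∑ l ∈ (Finset.univ.erase b).erase a, (q₂ l)^2 + (q₂ a)^2 + (q₂ b)^2 := by
        rw [Finset.sum_erase_add _ _ (by simp [mem_erase, hab] : a ∈ Finset.univ.erase b),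
          Finset.sum_erase_add _ _ (mem_univ b)]
      have hagree : ∑ l ∈ (Finset.univ.erase b).erase a, (q₃ l)^2
          = ∑ l ∈ (Finset.univ.erase b).erase a, (q₂ l)^2 := by
        refine sum_congr rfl fun l hl => ?_
        obtain ⟨hla, hlb⟩ : l ≠ a ∧ l ≠ b := by simpa [mem_erase] using hl
        rw [hq₃vals]; simp [hla, hlb]
      have hqa : q₃ a = m := by rw [hq₃vals]; simp [hab]
      have hqb : q₃ b = m := by rw [hq₃vals]; simp
      rw [h3, h2, hagree, hqa, hqb, hm]
      have h0 : q₂ a - q₂ b ≠ 0 := sub_ne_zero_of_ne hne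
      have hpos : 0 < (q₂ a - q₂ b)^2 := by positivity
      have expand : ((q₂ a + q₂ b)/2)^2 + ((q₂ a + q₂ b)/2)^2
          = q₂ a^2 + q₂ b^2 - (q₂ a - q₂ b)^2/2 := by ring
      linarith
    exact absurd (hmin₂ hq₃K') (not_le.mpr hsq)
  -- conclude
  set c := q₂ ⟨0, hn⟩ with hc
  have hall : ∀ l, q₂ l = c := fun l => hconst l ⟨0, hn⟩
  have hsum2 : (n : ℝ) * c = s := by
    have : ∑ l, q₂ l = ∑ l : Fin n, c := sum_congr rfl fun l _ => hall l
    rw [Finset.sum_const, card_univ, Fintype.card_fin] at this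
    rw [← hq₂K.2, this]
    simp [nsmul_eq_mul]
  have hn0 : (n:ℝ) ≠ 0 := Nat.cast_ne_zero.mpr hn.ne'
  have hcval : c = s / n := by
    field_simp
    linarith [hsum2]
  have heq : G q₂ = BinE n (s/n) (gmin k) := by
    have h1 : EB Finset.univ q₂ (gmin k)
        = BinE (Finset.univ : Finset (Fin n)).card c (gmin k) :=
      eb_const_q (fun l _ => hall l) (gmin k)
    rw [card_univ, Fintype.card_fin, hcval] at h1
    exact h1
  calc BinE n (s/n) (gmin k) = G q₂ := heq.symm
    _ = G q₁ := hq₂G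
    _ ≤ G q := hmin₁ hqK

end Sym

section Main
variable {n k : ℕ}

lemma indepExp_eq_eb (q : Fin n → ℝ) :
    indepExp q (fun S => ((min S.card k : ℕ) : ℝ)) = EB Finset.univ q (gmin k) := by
  rw [indepExp, EB, Finset.powerset_univ]
  exact sum_congr rfl fun S _ => by rw [Finset.compl_eq_univ_sdiff]; rfl

lemma phi_eq : Phi n k = BinE n ((k : ℝ)/n) (gmin k) := rfl

lemma phi_pos (hk : 1 ≤ k) (hkn : k ≤ n) : 0 < Phi n k := by
  have hn : 0 < n := lt_of_lt_of_le hk hkn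
  have h0 : (0:ℝ) < (k:ℝ)/n := by
    apply div_pos <;> exact_mod_cast (by omega : (0:ℕ) < _)
  have h1 : (k:ℝ)/n ≤ 1 := by
    rw [div_le_one (by exact_mod_cast hn)]
    exact_mod_cast hkn
  have := binE_gmin_ge k n ((k:ℝ)/n) (le_of_lt h0) h1
  have hg : gmin k n = (k:ℝ) := by
    unfold gmin; rw [min_eq_right hkn]
  rw [hg] at this
  rw [phi_eq]
  have : (0:ℝ) < (k:ℝ)/n * k := by
    apply mul_pos h0
    exact_mod_cast hk
  linarith [binE_gmin_ge k n ((k:ℝ)/n) (le_of_lt h0) h1, hg]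

/-- Step D : for `k ≤ s ≤ n`, `Phi n k ≤ B(s/n)`. -/
lemma phi_le_binE (hk : 1 ≤ k) (hkn : k ≤ n) {s : ℝ} (hks : (k:ℝ) ≤ s) (hsn : s ≤ n) :
    Phi n k ≤ BinE n (s/n) (gmin k) := by
  have hn : 0 < n := lt_of_lt_of_le hk hkn
  have hs0 : (0:ℝ) < s := lt_of_lt_of_le (by exact_mod_cast hk) hks
  have hlam0 : (0:ℝ) ≤ (k:ℝ)/s := by positivity
  have hlam1 : (k:ℝ)/s ≤ 1 := by rw [div_le_one hs0]; exact hks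
  have hsn' : s/(n:ℝ) ≤ 1 := by
    rw [div_le_one (by exact_mod_cast hn)]; exact hsn
  have hsn0 : (0:ℝ) ≤ s/(n:ℝ) := by positivity
  have key : (k:ℝ)/n = ((k:ℝ)/s) * (s/n) := by
    field_simp
  rw [phi_eq, key, binE_thin]
  refine binE_le_binE n (s/n) hsn0 hsn' _ _ fun t _ => ?_
  calc BinE t ((k:ℝ)/s) (gmin k) ≤ BinE t ((k:ℝ)/s) (fun _ => gmin k t) :=
        binE_le_binE t _ hlam0 hlam1 _ _ fun u hu => gmin_mono' k hu
    _ = gmin k t := binE_const _ _ _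

/-- Step E : for `0 ≤ s ≤ k`, `(s/k)·Phi n k ≤ B(s/n)`. -/
lemma binE_ge_smul (hk : 1 ≤ k) (hkn : k ≤ n) {s : ℝ} (hs0 : 0 ≤ s) (hsk : s ≤ (k:ℝ)) :
    (s/(k:ℝ)) * Phi n k ≤ BinE n (s/n) (gmin k) := by
  have hn : 0 < n := lt_of_lt_of_le hk hkn
  have hk0 : (0:ℝ) < (k:ℝ) := by exact_mod_cast hk
  have hlam0 : (0:ℝ) ≤ s/(k:ℝ) := by positivity
  have hlam1 : s/(k:ℝ) ≤ 1 := by rw [div_le_one hk0]; exact hsk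
  have hp0 : (0:ℝ) ≤ (k:ℝ)/n := by positivity
  have hp1 : (k:ℝ)/n ≤ 1 := by
    rw [div_le_one (by exact_mod_cast hn)]; exact_mod_cast hkn
  have key : s/(n:ℝ) = (s/(k:ℝ)) * ((k:ℝ)/n) := by
    field_simp
  rw [key, binE_thin, phi_eq, ← binE_smul]
  exact binE_le_binE n _ hp0 hp1 _ _ fun t _ => binE_gmin_ge k t _ hlam0 hlam1
end Main

section Marg
variable {n k : ℕ} {D : Finset (Fin n) → ℝ}

lemma marg_nonneg (hD0 : ∀ S, 0 ≤ D S) (i : Fin n) : 0 ≤ marginal D i :=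
  Finset.sum_nonneg fun S _ => hD0 S

lemma marg_le_one (hD0 : ∀ S, 0 ≤ D S) (hD1 : ∑ S : Finset (Fin n), D S = 1) (i : Fin n) :
    marginal D i ≤ 1 := by
  rw [marginal, ← hD1]
  exact Finset.sum_le_sum_of_subset_of_nonneg (Finset.filter_subset _ _)
    (fun S _ _ => hD0 S)

lemma sum_card_eq_sum_marginal (D : Finset (Fin n) → ℝ) :
    ∑ S : Finset (Fin n), D S * S.card = ∑ i : Fin n, marginal D i := by
  have step1 : ∀ S : Finset (Fin n), D S * S.card
      = ∑ i : Fin n, (if i ∈ S then D S else 0) := by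
    intro S
    rw [Finset.sum_ite_mem, Finset.univ_inter, Finset.sum_const, nsmul_eq_mul]
    ring
  rw [Finset.sum_congr rfl fun S _ => step1 S, Finset.sum_comm]
  exact Finset.sum_congr rfl fun i _ => (Finset.sum_filter _ _).symm

/-- correlated expectation is at most `min(∑ q, k)`. -/
lemma corr_le_k (hD0 : ∀ S, 0 ≤ D S) (hD1 : ∑ S : Finset (Fin n), D S = 1) :
    ∑ S : Finset (Fin n), D S * ((min S.card k : ℕ) : ℝ) ≤ k := by
  calc ∑ S : Finset (Fin n), D S * ((min S.card k : ℕ) : ℝ)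
      ≤ ∑ S : Finset (Fin n), D S * k :=
        Finset.sum_le_sum fun S _ =>
          mul_le_mul_of_nonneg_left (gmin_le_k k S.card) (hD0 S)
    _ = k := by rw [← Finset.sum_mul, hD1, one_mul]

lemma corr_le_sum (hD0 : ∀ S, 0 ≤ D S) :
    ∑ S : Finset (Fin n), D S * ((min S.card k : ℕ) : ℝ) ≤ ∑ i : Fin n, marginal D i := by
  rw [← sum_card_eq_sum_marginal D]
  exact Finset.sum_le_sum fun S _ =>
    mul_le_mul_of_nonneg_left (gmin_le_self k S.card) (hD0 S)

lemma corr_nonneg (hD0 : ∀ S, 0 ≤ D S) :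
    0 ≤ ∑ S : Finset (Fin n), D S * ((min S.card k : ℕ) : ℝ) :=
  Finset.sum_nonneg fun S _ => mul_nonneg (hD0 S) (gmin_nonneg k S.card)

lemma indepExp_nonneg {q : Fin n → ℝ} (hq : ∀ i, 0 ≤ q i ∧ q i ≤ 1) :
    0 ≤ indepExp q (fun S => ((min S.card k : ℕ) : ℝ)) := by
  refine Finset.sum_nonneg fun S _ => ?_
  refine mul_nonneg (mul_nonneg (Finset.prod_nonneg fun i _ => (hq i).1)
    (Finset.prod_nonneg fun i _ => by linarith [(hq i).2])) (gmin_nonneg k S.card)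

/-- the main inequality (part 2 of the theorem). -/
lemma main_ineq (hk : 1 ≤ k) (hkn : k ≤ n)
    (hD0 : ∀ S, 0 ≤ D S) (hD1 : ∑ S : Finset (Fin n), D S = 1) :
    (Phi n k / k) * (∑ S : Finset (Fin n), D S * ((min S.card k : ℕ) : ℝ)) ≤
      indepExp (marginal D) (fun S => ((min S.card k : ℕ) : ℝ)) := by
  have hn : 0 < n := lt_of_lt_of_le hk hkn
  set q := marginal D with hq
  set s := ∑ i : Fin n, q i with hs
  have hqi : ∀ i, 0 ≤ q i ∧ q i ≤ 1 :=
    fun i => ⟨marg_nonneg hD0 i, marg_le_one hD0 hD1 i⟩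
  have hs0 : 0 ≤ s := Finset.sum_nonneg fun i _ => (hqi i).1
  have hsn : s ≤ n := by
    calc s ≤ ∑ _i : Fin n, (1:ℝ) := Finset.sum_le_sum fun i _ => (hqi i).2
      _ = n := by simp
  have hsym : BinE n (s/n) (gmin k) ≤ indepExp q (fun S => ((min S.card k : ℕ) : ℝ)) := by
    rw [indepExp_eq_eb q]
    exact symmetrization k hn q hqi
  have hphi := phi_pos (n := n) hk hkn
  have hk0 : (0:ℝ) < k := by exact_mod_cast hk
  have hE := corr_le_k (k := k) hD0 hD1
  have hEs := corr_le_sum (k := k) hD0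
  have hEnn := corr_nonneg (k := k) (D := D) hD0
  set E := ∑ S : Finset (Fin n), D S * ((min S.card k : ℕ) : ℝ) with hEdef
  rcases le_total s (k:ℝ) with hcase | hcase
  · -- s ≤ k : E ≤ s, so (Φ/k)·E ≤ (s/k)·Φ ≤ B(s/n)
    have h1 : (Phi n k / k) * E ≤ (Phi n k / k) * s :=
      mul_le_mul_of_nonneg_left (le_trans hEs (le_of_eq rfl)) (by positivity)
    have h2 : (Phi n k / k) * s = (s/(k:ℝ)) * Phi n k := by ring
    calc (Phi n k / k) * E ≤ (Phi n k / k) * s := h1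
      _ = (s/(k:ℝ)) * Phi n k := h2
      _ ≤ BinE n (s/n) (gmin k) := binE_ge_smul hk hkn hs0 hcase
      _ ≤ _ := hsym
  · -- k ≤ s : E ≤ k, so (Φ/k)·E ≤ Φ ≤ B(s/n)
    have h1 : (Phi n k / k) * E ≤ (Phi n k / k) * k :=
      mul_le_mul_of_nonneg_left hE (by positivity)
    have h2 : (Phi n k / k) * (k:ℝ) = Phi n k := by field_simp
    calc (Phi n k / k) * E ≤ (Phi n k / k) * k := h1
      _ = Phi n k := h2
      _ ≤ BinE n (s/n) (gmin k) := phi_le_binE hk hkn hcase hsn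
      _ ≤ _ := hsym
end Marg

section Witness
variable {n k : ℕ}

/-- uniform distribution on `k`-subsets. -/
noncomputable def D0 (n k : ℕ) : Finset (Fin n) → ℝ :=
  fun S => if S.card = k then ((n.choose k : ℝ))⁻¹ else 0

lemma card_filter_card_eq : (Finset.univ.filter (fun S : Finset (Fin n) => S.card = k)).card
    = n.choose k := by
  rw [← Finset.powerset_univ, ← Finset.powersetCard_eq_filter, Finset.card_powersetCard,
    card_univ, Fintype.card_fin]

lemma D0_nonneg (S : Finset (Fin n)) : 0 ≤ D0 n k S := by
  unfold D0
  split <;> positivity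

lemma D0_sum (hkn : k ≤ n) : ∑ S : Finset (Fin n), D0 n k S = 1 := by
  have hc : 0 < n.choose k := Nat.choose_pos hkn
  unfold D0
  rw [← Finset.sum_filter]
  rw [Finset.sum_const, card_filter_card_eq, nsmul_eq_mul]
  field_simp

lemma D0_exp (hkn : k ≤ n) :
    ∑ S : Finset (Fin n), D0 n k S * ((min S.card k : ℕ) : ℝ) = k := by
  have hc : 0 < n.choose k := Nat.choose_pos hkn
  unfold D0
  have step : ∀ S : Finset (Fin n),
      (if S.card = k then ((n.choose k : ℝ))⁻¹ else 0) * ((min S.card k : ℕ) : ℝ)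
        = (if S.card = k then ((n.choose k : ℝ))⁻¹ * k else 0) := by
    intro S
    split
    · rename_i h
      rw [h, min_self]
    · ring
  rw [Finset.sum_congr rfl fun S _ => step S, ← Finset.sum_filter,
    Finset.sum_const, card_filter_card_eq, nsmul_eq_mul]
  field_simp

lemma card_filter_mem_card_eq (hk : 1 ≤ k) (i : Fin n) :
    (Finset.univ.filter (fun S : Finset (Fin n) => i ∈ S ∧ S.card = k)).card
      = (n-1).choose (k-1) := by
  have : (Finset.univ.filter (fun S : Finset (Fin n) => i ∈ S ∧ S.card = k)).card
      = (Finset.powersetCard (k-1) (Finset.univ.erase i)).card := by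
    apply Finset.card_bij' (fun S _ => S.erase i) (fun T _ => insert i T)
    · intro S hS
      exact Finset.insert_erase (Finset.mem_filter.mp hS).2.1
    · intro T hT
      obtain ⟨hsub, -⟩ := Finset.mem_powersetCard.mp hT
      have hiT : i ∉ T := fun hc => (Finset.mem_erase.mp (hsub hc)).1 rfl
      exact Finset.erase_insert hiT
    · intro S hS
      obtain ⟨hiS, hcard⟩ := (Finset.mem_filter.mp hS).2
      rw [Finset.mem_powersetCard]
      exact ⟨Finset.erase_subset_erase i (Finset.subset_univ S),
        by rw [Finset.card_erase_of_mem hiS, hcard]⟩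
    · intro T hT
      obtain ⟨hsub, hcard⟩ := Finset.mem_powersetCard.mp hT
      have hiT : i ∉ T := fun hc => (Finset.mem_erase.mp (hsub hc)).1 rfl
      refine Finset.mem_filter.mpr ⟨Finset.mem_univ _, Finset.mem_insert_self i T, ?_⟩
      rw [Finset.card_insert_of_notMem hiT, hcard]
      omega
  rw [this, Finset.card_powersetCard, Finset.card_erase_of_mem (Finset.mem_univ i),
    card_univ, Fintype.card_fin]

lemma D0_marginal (hk : 1 ≤ k) (hkn : k ≤ n) (i : Fin n) :
    marginal (D0 n k) i = (k : ℝ) / n := by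
  have hn : 0 < n := lt_of_lt_of_le hk hkn
  have hc : 0 < n.choose k := Nat.choose_pos hkn
  rw [marginal]
  unfold D0
  rw [Finset.sum_filter]
  have step : ∀ S : Finset (Fin n),
      (if i ∈ S then (if S.card = k then ((n.choose k : ℝ))⁻¹ else 0) else 0)
        = (if i ∈ S ∧ S.card = k then ((n.choose k : ℝ))⁻¹ else 0) := by
    intro S
    by_cases h1 : i ∈ S <;> by_cases h2 : S.card = k <;> simp [h1, h2]
  rw [Finset.sum_congr rfl fun S _ => step S, ← Finset.sum_filter,
    Finset.sum_const, card_filter_mem_card_eq hk i, nsmul_eq_mul]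
  -- now: (n-1).choose (k-1) * (choose n k)⁻¹ = k / n
  have hid : n * ((n-1).choose (k-1)) = k * n.choose k := by
    have := Nat.add_one_mul_choose_eq (n-1) (k-1)
    have h1 : n - 1 + 1 = n := by omega
    have h2 : k - 1 + 1 = k := by omega
    rw [h1, h2] at this
    rw [this]
    ring
  have hn0 : (n:ℝ) ≠ 0 := Nat.cast_ne_zero.mpr (by omega)
  have hc0 : ((n.choose k : ℕ):ℝ) ≠ 0 := Nat.cast_ne_zero.mpr (by omega)
  field_simp
  have hR : ((n:ℝ)) * (((n-1).choose (k-1)) : ℝ) = (k:ℝ) * ((n.choose k) : ℝ) := by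
    exact_mod_cast hid
  linarith

lemma D0_indepExp (hk : 1 ≤ k) (hkn : k ≤ n) :
    indepExp (marginal (D0 n k)) (fun S => ((min S.card k : ℕ) : ℝ)) = Phi n k := by
  have hmargeq : marginal (D0 n k) = fun _ : Fin n => (k:ℝ)/n := by
    funext i
    exact D0_marginal hk hkn i
  rw [hmargeq, indepExp_eq_eb, eb_const_q (fun i _ => rfl) (gmin k), card_univ,
    Fintype.card_fin, phi_eq]
end Witness

/-- The correlation gap of the `k`-uniform rank function `S ↦ min(|S|,k)` is
exactly `k / Φ(n,k)`; in particular the independent expectation with matching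
marginals is at least `(Φ(n,k)/k)` times the correlated expectation. -/
theorem correlation_gap_k_uniform (n k : ℕ) (hk : 1 ≤ k) (hkn : k ≤ n) :
    (sSup {x : ℝ | ∃ D : Finset (Fin n) → ℝ,
        (∀ S, 0 ≤ D S) ∧ (∑ S : Finset (Fin n), D S = 1) ∧
        indepExp (marginal D) (fun S => (min S.card k : ℕ)) ≠ 0 ∧
        x = (∑ S : Finset (Fin n), D S * (min S.card k : ℕ)) /
              indepExp (marginal D) (fun S => (min S.card k : ℕ))}
      = (k : ℝ) / Phi n k) ∧
    (∀ D : Finset (Fin n) → ℝ, (∀ S, 0 ≤ D S) →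
      (∑ S : Finset (Fin n), D S = 1) →
      (Phi n k / k) * (∑ S : Finset (Fin n), D S * (min S.card k : ℕ)) ≤
        indepExp (marginal D) (fun S => (min S.card k : ℕ))) := by
  have hphi := phi_pos (n := n) (k := k) hk hkn
  have hk0 : (0:ℝ) < k := by exact_mod_cast hk
  constructor
  · apply IsGreatest.csSup_eq
    constructor
    · -- membership via D0
      refine ⟨D0 n k, fun S => D0_nonneg S, D0_sum hkn, ?_, ?_⟩
      · rw [D0_indepExp hk hkn]
        exact ne_of_gt hphi
      · rw [D0_indepExp hk hkn, D0_exp hkn]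
    · -- upper bound
      rintro x ⟨D, hD0, hD1, hne, rfl⟩
      set E := ∑ S : Finset (Fin n), D S * ((min S.card k : ℕ) : ℝ) with hE
      set G := indepExp (marginal D) (fun S => ((min S.card k : ℕ) : ℝ)) with hG
      have hGnn : 0 ≤ G :=
        indepExp_nonneg fun i => ⟨marg_nonneg hD0 i, marg_le_one hD0 hD1 i⟩
      have hGpos : 0 < G := lt_of_le_of_ne hGnn (Ne.symm hne)
      have hmain := main_ineq hk hkn hD0 hD1
      rw [div_le_div_iff₀ hGpos hphi]
      calc E * Phi n k = ((Phi n k / k) * E) * k := by field_simp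
        _ ≤ G * k := by
            have := mul_le_mul_of_nonneg_right hmain (le_of_lt hk0)
            linarith [this]
        _ = k * G := by ring
  · intro D hD0 hD1
    exact main_ineq hk hkn hD0 hD1
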